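/- arXiv:2311.05360 — 5 statements merged into one kernel-verified Lean document; each statement's English description precedes it below -/
import Mathlib

section
/- Let Φ be a real (L+1)×T matrix such that Φ·Φᵀ is invertible, let Y_f be a real q×T matrix, let Θ* := Y_f·Φᵀ·(Φ·Φᵀ)⁻¹ and let E := Y_f − Θ*·Φ. Then the following are equivalent: (i) for every vector b ∈ ℝ^{L+1} and every vector g ∈ ℝ^T satisfying Φ·g = b, one has Y_f·g = Θ*·b; (ii) for every vector ĝ ∈ ℝ^T satisfying Φ·ĝ = 0, one has E·ĝ = 0. (Equivalence of the basis-functions DeePC behavioral predictor with the basis-functions SPC identified predictor.) -/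
open Matrix

/-- Equivalence of the basis-functions DeePC behavioral predictor with the
basis-functions SPC identified predictor. -/
theorem phi_deepc_spc_equivalence
    {L T q : ℕ}
    (Φ : Matrix (Fin (L + 1)) (Fin T) ℝ)
    (Yf : Matrix (Fin q) (Fin T) ℝ)
    (hΦ : IsUnit (Φ * Φᵀ))
    (Θstar : Matrix (Fin q) (Fin (L + 1)) ℝ)
    (hΘ : Θstar = Yf * Φᵀ * (Φ * Φᵀ)⁻¹)
    (E : Matrix (Fin q) (Fin T) ℝ)
    (hE : E = Yf - Θstar * Φ) :
    (∀ (b : Fin (L + 1) → ℝ) (g : Fin T → ℝ),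
        Φ *ᵥ g = b → Yf *ᵥ g = Θstar *ᵥ b) ↔
      (∀ ghat : Fin T → ℝ, Φ *ᵥ ghat = 0 → E *ᵥ ghat = 0) := by
  have hdet : IsUnit (Φ * Φᵀ).det := (Matrix.isUnit_iff_isUnit_det _).mp hΦ
  have hEΦT : E * Φᵀ = 0 := by
    subst hE hΘ
    rw [Matrix.sub_mul, Matrix.mul_assoc (Yf * Φᵀ * (Φ * Φᵀ)⁻¹),
      Matrix.mul_assoc (Yf * Φᵀ), Matrix.nonsing_inv_mul _ hdet, Matrix.mul_one,
      sub_self]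
  constructor
  · intro h ghat hg
    have h0 := h 0 ghat hg
    rw [Matrix.mulVec_zero] at h0
    rw [hE, Matrix.sub_mulVec, h0, ← Matrix.mulVec_mulVec, hg, Matrix.mulVec_zero,
      sub_self]
  · intro h b g hg
    set g₀ : Fin T → ℝ := g - Φᵀ *ᵥ ((Φ * Φᵀ)⁻¹ *ᵥ b) with hg₀def
    have hg₀ : Φ *ᵥ g₀ = 0 := by
      rw [hg₀def, Matrix.mulVec_sub, hg, Matrix.mulVec_mulVec, Matrix.mulVec_mulVec,
        Matrix.mul_nonsing_inv _ hdet, Matrix.one_mulVec, sub_self]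
    have hEg : E *ᵥ g = 0 := by
      have h1 := h g₀ hg₀
      rw [hg₀def, Matrix.mulVec_sub, Matrix.mulVec_mulVec, hEΦT, Matrix.zero_mulVec,
        sub_zero] at h1
      exact h1
    have : Yf = E + Θstar * Φ := by rw [hE]; simp
    rw [this, Matrix.add_mulVec, hEg, zero_add, ← Matrix.mulVec_mulVec, hg]
end

section
/- Let Φ be a real (L+1)×T matrix such that Φ·Φᵀ is invertible, let Y_f be a real q×T matrix, let Θ* := Y_f·Φᵀ·(Φ·Φᵀ)⁻¹ and let E := Y_f − Θ*·Φ. Then for every vector b ∈ ℝ^{L+1}, the set of φ-DeePC predicted outputs {Y_f·g : g ∈ ℝ^T, Φ·g = b} equals the set {Θ*·b + E·ĝ : ĝ ∈ ℝ^T, Φ·ĝ = 0}. -/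
open Matrix

/-- The φ-DeePC prediction set is the φ-SPC prediction perturbed by residuals
acting on the null space of Φ. -/
theorem deepc_prediction_set_eq
    {L T q : ℕ}
    (Φ : Matrix (Fin (L + 1)) (Fin T) ℝ)
    (Yf : Matrix (Fin q) (Fin T) ℝ)
    (hΦ : IsUnit (Φ * Φᵀ))
    (Θstar : Matrix (Fin q) (Fin (L + 1)) ℝ)
    (hΘ : Θstar = Yf * Φᵀ * (Φ * Φᵀ)⁻¹)
    (E : Matrix (Fin q) (Fin T) ℝ)
    (hE : E = Yf - Θstar * Φ) :
    ∀ b : Fin (L + 1) → ℝ,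
      {y : Fin q → ℝ | ∃ g : Fin T → ℝ, Φ *ᵥ g = b ∧ y = Yf *ᵥ g} =
        {y : Fin q → ℝ | ∃ ghat : Fin T → ℝ,
          Φ *ᵥ ghat = 0 ∧ y = Θstar *ᵥ b + E *ᵥ ghat} := by
  intro b
  set A := Φ * Φᵀ with hA
  have hdet : IsUnit A.det := (Matrix.isUnit_iff_isUnit_det A).mp hΦ
  have hAinv : A * A⁻¹ = 1 := Matrix.mul_nonsing_inv A hdet
  set P := Φᵀ * A⁻¹ with hP
  have hΦP : Φ * P = 1 := by
    rw [hP, ← Matrix.mul_assoc, ← hA, hAinv]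
  have h1 : Θstar * A = Yf * Φᵀ := by
    rw [hΘ, Matrix.mul_assoc, Matrix.nonsing_inv_mul A hdet, Matrix.mul_one]
  have hEP : E * P = 0 := by
    rw [hE, Matrix.sub_mul]
    have h2 : Θstar * Φ * (Φᵀ * A⁻¹) = Yf * (Φᵀ * A⁻¹) := by
      rw [← Matrix.mul_assoc (Θstar * Φ) Φᵀ A⁻¹, Matrix.mul_assoc Θstar Φ Φᵀ,
        ← hA, h1, Matrix.mul_assoc]
    rw [hP, h2, sub_self]
  have hYf : ∀ g : Fin T → ℝ, Yf *ᵥ g = Θstar *ᵥ (Φ *ᵥ g) + E *ᵥ g := by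
    intro g
    rw [hE, Matrix.sub_mulVec, Matrix.mulVec_mulVec]
    abel
  have hΦPb : Φ *ᵥ (P *ᵥ b) = b := by
    rw [Matrix.mulVec_mulVec, hΦP, Matrix.one_mulVec]
  have hEPb : E *ᵥ (P *ᵥ b) = 0 := by
    rw [Matrix.mulVec_mulVec, hEP, Matrix.zero_mulVec]
  ext y
  simp only [Set.mem_setOf_eq]
  constructor
  · rintro ⟨g, hg, rfl⟩
    refine ⟨g - P *ᵥ b, ?_, ?_⟩
    · rw [Matrix.mulVec_sub, hg, hΦPb, sub_self]
    · rw [hYf g, hg, Matrix.mulVec_sub, hEPb, sub_zero]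
  · rintro ⟨ghat, hghat, rfl⟩
    refine ⟨P *ᵥ b + ghat, ?_, ?_⟩
    · rw [Matrix.mulVec_add, hghat, hΦPb, add_zero]
    · rw [hYf, Matrix.mulVec_add, hghat, hΦPb, add_zero,
        Matrix.mulVec_add, hEPb, zero_add]
end

section
/- Let Φ be a real (L+1)×T matrix such that Φ·Φᵀ is invertible, let Y_f be a real q×T matrix, let Θ* := Y_f·Φᵀ·(Φ·Φᵀ)⁻¹ and let E := Y_f − Θ*·Φ. Fix a vector b ∈ ℝ^{L+1}. Then every g ∈ ℝ^T with Φ·g = b satisfies Y_f·g = Θ*·b if and only if E·ĝ = 0 for every ĝ ∈ ℝ^T with Φ·ĝ = 0. -/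
open Matrix

/-- Pointwise (fixed b) version of the equivalence between the φ-DeePC
behavioral predictor and the φ-SPC identified predictor. -/
theorem pointwise_deepc_spc_equivalence
    {L T q : ℕ}
    (Φ : Matrix (Fin (L + 1)) (Fin T) ℝ)
    (Yf : Matrix (Fin q) (Fin T) ℝ)
    (hΦ : IsUnit (Φ * Φᵀ))
    (Θstar : Matrix (Fin q) (Fin (L + 1)) ℝ)
    (hΘ : Θstar = Yf * Φᵀ * (Φ * Φᵀ)⁻¹)
    (E : Matrix (Fin q) (Fin T) ℝ)
    (hE : E = Yf - Θstar * Φ)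
    (b : Fin (L + 1) → ℝ) :
    (∀ g : Fin T → ℝ, Φ *ᵥ g = b → Yf *ᵥ g = Θstar *ᵥ b) ↔
      (∀ ghat : Fin T → ℝ, Φ *ᵥ ghat = 0 → E *ᵥ ghat = 0) := by
  have hdet : IsUnit (Φ * Φᵀ).det := (Matrix.isUnit_iff_isUnit_det _).mp hΦ
  have hinv : (Φ * Φᵀ) * (Φ * Φᵀ)⁻¹ = 1 := Matrix.mul_nonsing_inv _ hdet
  set g0 : Fin T → ℝ := Φᵀ *ᵥ ((Φ * Φᵀ)⁻¹ *ᵥ b) with hg0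
  have hΦg0 : Φ *ᵥ g0 = b := by
    rw [hg0, Matrix.mulVec_mulVec, Matrix.mulVec_mulVec, hinv, Matrix.one_mulVec]
  have hYfg0 : Yf *ᵥ g0 = Θstar *ᵥ b := by
    rw [hg0, hΘ, Matrix.mulVec_mulVec, Matrix.mulVec_mulVec, Matrix.mul_assoc]
  constructor
  · intro h ghat hghat
    have h1 : Φ *ᵥ (g0 + ghat) = b := by
      rw [Matrix.mulVec_add, hΦg0, hghat, add_zero]
    have h2 := h _ h1
    rw [Matrix.mulVec_add, hYfg0] at h2
    have hYg : Yf *ᵥ ghat = 0 := by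
      have := add_right_cancel (a := Yf *ᵥ ghat) (b := Θstar *ᵥ b) (c := 0)
      rw [add_comm] at h2
      simpa using congrArg (fun v => v - Θstar *ᵥ b) h2
    rw [hE, Matrix.sub_mulVec, ← Matrix.mulVec_mulVec, hghat, hYg,
      Matrix.mulVec_zero, sub_zero]
  · intro h g hg
    have h1 : Φ *ᵥ (g - g0) = 0 := by
      rw [Matrix.mulVec_sub, hΦg0, hg, sub_self]
    have h2 := h _ h1
    rw [hE, Matrix.sub_mulVec, ← Matrix.mulVec_mulVec, h1, Matrix.mulVec_zero,
      sub_zero, Matrix.mulVec_sub, sub_eq_zero] at h2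
    rw [h2, hYfg0]
end

section
/- Let Φ be a real (L+1)×T matrix, let Y_f be a real q×T matrix, let γ > 0 be such that Φ·Φᵀ + γ·I is positive definite (hence invertible), and let Θ^{R*} := Y_f·Φᵀ·(Φ·Φᵀ + γ·I)⁻¹. Then for every vector b ∈ ℝ^{L+1} there exists a unique g ∈ ℝ^{L+1} satisfying (Φ·Φᵀ + γ·I)·g = b, and this g satisfies Y_f·Φᵀ·g = Θ^{R*}·b. Consequently, the ridge φ-DeePC predictor is single-valued and coincides with the ridge-regression φ-SPC predictor b ↦ Θ^{R*}·b. -/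
open Matrix

/-- The ridge φ-DeePC predictor is single-valued and coincides with the
ridge-regression φ-SPC predictor b ↦ Θ^{R*}·b. -/
theorem ridge_deepc_spc_equivalence
    {L T q : ℕ}
    (Φ : Matrix (Fin (L + 1)) (Fin T) ℝ)
    (Yf : Matrix (Fin q) (Fin T) ℝ)
    (γ : ℝ) (hγ : 0 < γ)
    (hpos : (Φ * Φᵀ + γ • (1 : Matrix (Fin (L + 1)) (Fin (L + 1)) ℝ)).PosDef)
    (ΘR : Matrix (Fin q) (Fin (L + 1)) ℝ)
    (hΘR : ΘR = Yf * Φᵀ *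
      (Φ * Φᵀ + γ • (1 : Matrix (Fin (L + 1)) (Fin (L + 1)) ℝ))⁻¹) :
    ∀ b : Fin (L + 1) → ℝ,
      (∃! g : Fin (L + 1) → ℝ,
        (Φ * Φᵀ + γ • (1 : Matrix (Fin (L + 1)) (Fin (L + 1)) ℝ)) *ᵥ g = b) ∧
      ∀ g : Fin (L + 1) → ℝ,
        (Φ * Φᵀ + γ • (1 : Matrix (Fin (L + 1)) (Fin (L + 1)) ℝ)) *ᵥ g = b →
          (Yf * Φᵀ) *ᵥ g = ΘR *ᵥ b := by
  intro b
  set A := Φ * Φᵀ + γ • (1 : Matrix (Fin (L + 1)) (Fin (L + 1)) ℝ) with hA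
  have hinv : IsUnit A.det := isUnit_iff_ne_zero.mpr (ne_of_gt hpos.det_pos)
  have hAinv : A⁻¹ * A = 1 := nonsing_inv_mul A hinv
  constructor
  · refine ⟨A⁻¹ *ᵥ b, ?_, ?_⟩
    · show A *ᵥ (A⁻¹ *ᵥ b) = b
      rw [mulVec_mulVec, mul_nonsing_inv A hinv, one_mulVec]
    · intro g hg
      have : A⁻¹ *ᵥ (A *ᵥ g) = A⁻¹ *ᵥ b := by rw [hg]
      rwa [mulVec_mulVec, hAinv, one_mulVec] at this
  · intro g hg
    simp only [hΘR, ← hg, mulVec_mulVec, Matrix.mul_assoc, hAinv, Matrix.mul_one]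
end

section
/- Let Φ be a real (L+1)×T matrix such that Φ·Φᵀ is invertible, let Y_f be a real q×T matrix, let Θ* := Y_f·Φᵀ·(Φ·Φᵀ)⁻¹ and E := Y_f − Θ*·Φ. Fix b ∈ ℝ^{L+1} and set g_r := Φᵀ·(Φ·Φᵀ)⁻¹·b. Then the set of pairs {(Y_f·g, ‖g − g_r‖₂²) : g ∈ ℝ^T, Φ·g = b} equals the set of pairs {(Θ*·b + E·ĝ, ‖ĝ‖₂²) : ĝ ∈ ℝ^T, Φ·ĝ = 0}. In particular, the regularized formulations φ-DeePC-R1 (variables g with constraint Φ·g = b and regularization λ‖g − g_r‖₂²) and φ-DeePC-R2 (variables ĝ with constraint Φ·ĝ = 0, predictions Y_f·(g_r + ĝ) and regularization λ‖ĝ‖₂²) have identical feasible prediction–cost pairs, hence produce identical predicted outputs for the same λ. -/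
open Matrix

/-- The regularized formulations φ-DeePC-R1 and φ-DeePC-R2 have identical
feasible prediction–cost pairs. -/
theorem deepc_R1_R2_equivalence
    {L T q : ℕ}
    (Φ : Matrix (Fin (L + 1)) (Fin T) ℝ)
    (Yf : Matrix (Fin q) (Fin T) ℝ)
    (hΦ : IsUnit (Φ * Φᵀ))
    (Θstar : Matrix (Fin q) (Fin (L + 1)) ℝ)
    (hΘ : Θstar = Yf * Φᵀ * (Φ * Φᵀ)⁻¹)
    (E : Matrix (Fin q) (Fin T) ℝ)
    (hE : E = Yf - Θstar * Φ)
    (b : Fin (L + 1) → ℝ)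
    (gr : Fin T → ℝ)
    (hgr : gr = (Φᵀ * (Φ * Φᵀ)⁻¹) *ᵥ b) :
    {p : (Fin q → ℝ) × ℝ | ∃ g : Fin T → ℝ,
        Φ *ᵥ g = b ∧ p = (Yf *ᵥ g, ∑ i, (g i - gr i) ^ 2)} =
      {p : (Fin q → ℝ) × ℝ | ∃ ghat : Fin T → ℝ,
        Φ *ᵥ ghat = 0 ∧ p = (Θstar *ᵥ b + E *ᵥ ghat, ∑ i, (ghat i) ^ 2)} := by
  have hdet : IsUnit (Φ * Φᵀ).det := (Matrix.isUnit_iff_isUnit_det _).mp hΦ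
  have hΦgr : Φ *ᵥ gr = b := by
    rw [hgr, mulVec_mulVec, ← Matrix.mul_assoc, Matrix.mul_nonsing_inv _ hdet,
      one_mulVec]
  have hYfgr : Yf *ᵥ gr = Θstar *ᵥ b := by
    rw [hΘ, hgr, mulVec_mulVec, Matrix.mul_assoc]
  ext p
  simp only [Set.mem_setOf_eq]
  constructor
  · rintro ⟨g, hg, rfl⟩
    refine ⟨g - gr, ?_, ?_⟩
    · rw [mulVec_sub, hg, hΦgr, sub_self]
    · have hEg : E *ᵥ (g - gr) = Yf *ᵥ g - Θstar *ᵥ b := by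
        rw [hE, sub_mulVec, ← mulVec_mulVec, mulVec_sub Φ, hg, hΦgr, sub_self,
          mulVec_zero, sub_zero, mulVec_sub, hYfgr]
      rw [hEg]
      simp [Pi.sub_apply]
  · rintro ⟨ghat, hghat, rfl⟩
    refine ⟨gr + ghat, ?_, ?_⟩
    · rw [mulVec_add, hΦgr, hghat, add_zero]
    · have hEg : E *ᵥ ghat = Yf *ᵥ ghat := by
        rw [hE, sub_mulVec, ← mulVec_mulVec, hghat, mulVec_zero, sub_zero]
      rw [mulVec_add, hYfgr, hEg]
      simp [Pi.add_apply]
end
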